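/- Let N ∈ ℕ, let W be a diagonal positive definite N×N real matrix, let α, γ > 0, a ≤ 0 ≤ b, and v ∈ ℝ^N. Define σ_{[a,b]}(ξ) = Σᵢ₌₁^N max(a ξᵢ, b ξᵢ) and the componentwise clamp Π_{[a,b]}(y)ᵢ = min(max(yᵢ, a), b). Then the function ξ ↦ (1/(2α))(ξ − v)ᵀ (γ W⁻¹)(ξ − v) + σ_{[a,b]}(ξ) has a unique minimizer over ℝ^N, given by ξ* = v − (α/γ) W Π_{[a,b]}((γ/α) W⁻¹ v). -/

import Mathlib

open Matrix

/-- Componentwise clamp of a vector to the interval `[a, b]`. -/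
def clampVec {N : ℕ} (a b : ℝ) (y : Fin N → ℝ) : Fin N → ℝ :=
  fun i => min (max (y i) a) b

/-- Support function of the box `[a, b]^N` evaluated at `ξ`. -/
def boxSupport {N : ℕ} (a b : ℝ) (ξ : Fin N → ℝ) : ℝ :=
  ∑ i, max (a * ξ i) (b * ξ i)

/-- One-dimensional weighted Moreau identity/inequality. -/
lemma oneD (c a b v t : ℝ) (hc : 0 < c) (ha : a ≤ 0) (hb : 0 ≤ b) :
    c/2 * ((v - min (max (c*v) a) b / c) - v)^2
      + max (a * (v - min (max (c*v) a) b / c)) (b * (v - min (max (c*v) a) b / c))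
      + c/2 * (t - (v - min (max (c*v) a) b / c))^2
    ≤ c/2 * (t - v)^2 + max (a*t) (b*t) := by
  have hab : a ≤ b := ha.trans hb
  set p := min (max (c*v) a) b with hp
  set s := v - p / c with hs
  have hpa : a ≤ p := le_min (le_max_right _ _) hab
  have hpb : p ≤ b := min_le_right _ _
  have hps : max (a*s) (b*s) = p*s := by
    rcases le_or_gt (c*v) a with h | h
    · have hpa' : p = a := by rw [hp, max_eq_right h, min_eq_left hab]
      have hs0 : s ≤ 0 := by
        rw [hs, hpa']
        have : v ≤ a / c := (le_div_iff₀ hc).mpr (by linarith [mul_comm c v])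
        linarith
      rw [hpa']
      exact max_eq_left (by nlinarith)
    · rcases le_or_gt b (c*v) with h' | h'
      · have hpb' : p = b := by
          rw [hp, max_eq_left (hab.trans h'), min_eq_right h']
        have hs0 : 0 ≤ s := by
          rw [hs, hpb']
          have : b / c ≤ v := (div_le_iff₀ hc).mpr (by linarith [mul_comm c v])
          linarith
        rw [hpb']
        exact max_eq_right (by nlinarith)
      · have hpv : p = c * v := by
          rw [hp, max_eq_left h.le, min_eq_left h'.le]
        have hs0 : s = 0 := by
          rw [hs, hpv]; field_simp; ring
        rw [hs0]; simp
  have hpt : p*t ≤ max (a*t) (b*t) := by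
    rcases le_total t 0 with h | h
    · exact le_max_of_le_left (by nlinarith)
    · exact le_max_of_le_right (by nlinarith)
  rw [hps]
  have key : c/2 * ((v - p/c) - v)^2 + p*(v - p/c) + c/2 * (t - (v - p/c))^2
      = c/2*(t-v)^2 + p*t := by
    field_simp
    ring
  rw [hs]
  linarith [key, hpt]

/-- Closed-form (weighted Moreau) solution of the transformed μ-subproblem in the
discretized sGS-majorized ABCD algorithm: the unique minimizer of
`ξ ↦ (1/(2α)) (ξ−v)ᵀ (γ W⁻¹) (ξ−v) + δ*_{[a,b]}(ξ)` is
`ξ* = v − (α/γ) W Π_{[a,b]}((γ/α) W⁻¹ v)`. -/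
theorem mu_subproblem_closed_form
    (N : ℕ) (W : Matrix (Fin N) (Fin N) ℝ) (hWdiag : W.IsDiag) (hWpd : W.PosDef)
    (α γ a b : ℝ) (hα : 0 < α) (hγ : 0 < γ) (ha : a ≤ 0) (hb : 0 ≤ b)
    (v : Fin N → ℝ) :
    (∀ ξ : Fin N → ℝ,
        (1 / (2 * α)) * ((v - (α / γ) • (W *ᵥ clampVec a b ((γ / α) • (W⁻¹ *ᵥ v))) - v) ⬝ᵥ
            ((γ • W⁻¹) *ᵥ (v - (α / γ) • (W *ᵥ clampVec a b ((γ / α) • (W⁻¹ *ᵥ v))) - v)))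
          + boxSupport a b (v - (α / γ) • (W *ᵥ clampVec a b ((γ / α) • (W⁻¹ *ᵥ v))))
        ≤ (1 / (2 * α)) * ((ξ - v) ⬝ᵥ ((γ • W⁻¹) *ᵥ (ξ - v))) + boxSupport a b ξ) ∧
    (∀ ξ' : Fin N → ℝ,
        (∀ ξ : Fin N → ℝ,
          (1 / (2 * α)) * ((ξ' - v) ⬝ᵥ ((γ • W⁻¹) *ᵥ (ξ' - v))) + boxSupport a b ξ'
            ≤ (1 / (2 * α)) * ((ξ - v) ⬝ᵥ ((γ • W⁻¹) *ᵥ (ξ - v))) + boxSupport a b ξ) →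
        ξ' = v - (α / γ) • (W *ᵥ clampVec a b ((γ / α) • (W⁻¹ *ᵥ v)))) := by
  -- diagonal structure of W
  set d : Fin N → ℝ := fun i => W i i with hd
  have hW : W = Matrix.diagonal d := (hWdiag.diagonal_diag).symm
  have hdpos : ∀ i, 0 < d i := by
    intro i
    have h := hWpd.dotProduct_mulVec_pos (x := Pi.single i 1) (by
      intro h
      have := congrFun h i
      simp at this)
    simpa [hW, Matrix.mulVec_diagonal, Pi.single_apply] using h
  have hdne : ∀ i, d i ≠ 0 := fun i => (hdpos i).ne'
  have hWinv : W⁻¹ = Matrix.diagonal (fun i => (d i)⁻¹) := by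
    apply Matrix.inv_eq_right_inv
    rw [hW, Matrix.diagonal_mul_diagonal]
    simp only [mul_inv_cancel₀ (hdne _)]
    exact Matrix.diagonal_one
  -- coordinatewise quantities
  set c : Fin N → ℝ := fun i => γ / (α * d i) with hc
  have hcpos : ∀ i, 0 < c i := fun i => div_pos hγ (mul_pos hα (hdpos i))
  set xi : Fin N → ℝ :=
    v - (α / γ) • (W *ᵥ clampVec a b ((γ / α) • (W⁻¹ *ᵥ v))) with hxi
  have hxii : ∀ i, xi i = v i - min (max (c i * v i) a) b / c i := by
    intro i
    have h1 : ((γ / α) • (W⁻¹ *ᵥ v)) i = c i * v i := by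
      rw [hWinv]
      simp only [Pi.smul_apply, Matrix.mulVec_diagonal, smul_eq_mul, hc]
      field_simp
    have hmul : ∀ x : Fin N → ℝ, (W *ᵥ x) i = d i * x i := fun x => by
      rw [hW, Matrix.mulVec_diagonal]
    have hcl : clampVec a b ((γ / α) • (W⁻¹ *ᵥ v)) i
        = min (max (c i * v i) a) b := by
      rw [clampVec, h1]
    rw [hxi]
    simp only [Pi.sub_apply, Pi.smul_apply, smul_eq_mul, hmul, hcl]
    rw [hc]
    field_simp
  -- quadratic form as a sum
  have hquad : ∀ u : Fin N → ℝ,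
      (1 / (2 * α)) * (u ⬝ᵥ ((γ • W⁻¹) *ᵥ u)) = ∑ i, c i / 2 * (u i)^2 := by
    intro u
    rw [hWinv, dotProduct]
    simp only [Matrix.smul_mulVec, Pi.smul_apply, Matrix.mulVec_diagonal,
      smul_eq_mul]
    rw [Finset.mul_sum]
    refine Finset.sum_congr rfl fun i _ => ?_
    rw [hc]
    field_simp
  -- key coordinatewise inequality
  have hkey : ∀ ξ : Fin N → ℝ,
      (1 / (2 * α)) * ((xi - v) ⬝ᵥ ((γ • W⁻¹) *ᵥ (xi - v))) + boxSupport a b xi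
        + ∑ i, c i / 2 * (ξ i - xi i)^2
      ≤ (1 / (2 * α)) * ((ξ - v) ⬝ᵥ ((γ • W⁻¹) *ᵥ (ξ - v))) + boxSupport a b ξ := by
    intro ξ
    rw [hquad, hquad, boxSupport, boxSupport]
    have : ∀ i ∈ Finset.univ,
        c i / 2 * ((xi - v) i)^2 + max (a * xi i) (b * xi i)
          + c i / 2 * (ξ i - xi i)^2
        ≤ c i / 2 * ((ξ - v) i)^2 + max (a * ξ i) (b * ξ i) := by
      intro i _
      have h := oneD (c i) a b (v i) (ξ i) (hcpos i) ha hb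
      simp only [Pi.sub_apply]
      rw [hxii i]
      convert h using 3 <;> ring_nf
    calc (∑ i, c i / 2 * ((xi - v) i)^2) + (∑ i, max (a * xi i) (b * xi i))
          + ∑ i, c i / 2 * (ξ i - xi i)^2
        = ∑ i, (c i / 2 * ((xi - v) i)^2 + max (a * xi i) (b * xi i)
            + c i / 2 * (ξ i - xi i)^2) := by
          rw [Finset.sum_add_distrib, Finset.sum_add_distrib]
      _ ≤ ∑ i, (c i / 2 * ((ξ - v) i)^2 + max (a * ξ i) (b * ξ i)) :=
          Finset.sum_le_sum this
      _ = _ := Finset.sum_add_distrib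
  constructor
  · intro ξ
    have h := hkey ξ
    have hnn : (0:ℝ) ≤ ∑ i, c i / 2 * (ξ i - xi i)^2 :=
      Finset.sum_nonneg fun i _ =>
        mul_nonneg (by linarith [hcpos i]) (sq_nonneg _)
    linarith
  · intro ξ' hmin
    have h1 := hkey ξ'
    have h2 := hmin xi
    have hnn : ∀ i ∈ (Finset.univ : Finset (Fin N)),
        (0:ℝ) ≤ c i / 2 * (ξ' i - xi i)^2 := fun i _ =>
      mul_nonneg (by linarith [hcpos i]) (sq_nonneg _)
    have hle : (∑ i, c i / 2 * (ξ' i - xi i)^2) ≤ 0 := by linarith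
    have hz : ∀ i ∈ Finset.univ, c i / 2 * (ξ' i - xi i)^2 = 0 :=
      (Finset.sum_eq_zero_iff_of_nonneg hnn).mp
        (le_antisymm hle (Finset.sum_nonneg hnn))
    funext i
    have h0 := hz i (Finset.mem_univ i)
    have hci : c i / 2 ≠ 0 := (div_pos (hcpos i) two_pos).ne'
    have hsq : (ξ' i - xi i)^2 = 0 := (mul_eq_zero.mp h0).resolve_left hci
    have := pow_eq_zero_iff (n := 2) (by norm_num) |>.mp hsq
    have : ξ' i = xi i := by linarith
    exact this
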